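/- Let n ≥ 1 and let f₁, …, f_n : ℝ → ℝ be integrable functions. Fix x ∈ ℝ and set x_{n+1} := x. Then for all (ξ₁, …, ξ_n) ∈ ℝⁿ, ∫_{ℝⁿ} exp(−i(ξ₁x₁ + ⋯ + ξ_n x_n)) · ∏_{ℓ=1}^{n} f_ℓ(x_{ℓ+1} − x_ℓ) dx₁ ⋯ dx_n = exp(−i(ξ₁ + ⋯ + ξ_n)x) · ∏_{ℓ=1}^{n} conj( 𝓕f_ℓ(ξ₁ + ⋯ + ξ_ℓ) ), where 𝓕f(ζ) = ∫_ℝ e^{−iζy} f(y) dy and conj denotes complex conjugation. -/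

import Mathlib

open MeasureTheory Real Set Complex

private lemma fck_Ioi_eq_Ici {n : ℕ} (ℓ : Fin n) (h : (ℓ : ℕ) + 1 < n) :
    Finset.Ioi ℓ = Finset.Ici (⟨(ℓ : ℕ) + 1, h⟩ : Fin n) := by
  ext m
  simp only [Finset.mem_Ioi, Finset.mem_Ici, Fin.lt_def, Fin.le_def]
  omega

private lemma fck_Ioi_eq_empty {n : ℕ} (ℓ : Fin n) (h : ¬ (ℓ : ℕ) + 1 < n) :
    Finset.Ioi ℓ = ∅ := by
  ext m
  simp only [Finset.mem_Ioi, Fin.lt_def, Finset.notMem_empty, iff_false, not_lt]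
  omega

private lemma fck_sum_Ici_eq {n : ℕ} (u : Fin n → ℝ) (ℓ : Fin n) :
    ∑ m ∈ Finset.Ici ℓ, u m = u ℓ + ∑ m ∈ Finset.Ioi ℓ, u m := by
  rw [← Finset.Ioi_insert, Finset.sum_insert Finset.notMem_Ioi_self]

private lemma fck_sum_swap {n : ℕ} (g : Fin n → Fin n → ℝ) :
    ∑ ℓ, ∑ m ∈ Finset.Ici ℓ, g ℓ m = ∑ m, ∑ ℓ ∈ Finset.Iic m, g ℓ m := by
  classical
  have h1 : ∀ ℓ : Fin n, Finset.Ici ℓ = Finset.univ.filter (fun m => ℓ ≤ m) := by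
    intro ℓ; ext m; simp
  have h2 : ∀ m : Fin n, Finset.Iic m = Finset.univ.filter (fun ℓ => ℓ ≤ m) := by
    intro m; ext ℓ; simp
  simp_rw [h1, h2, Finset.sum_filter]
  exact Finset.sum_comm

/-- Fourier transform of the chained kernel: for integrable `f₁,…,f_n : ℝ → ℝ`, `x ∈ ℝ`
(with `x_{n+1} := x`) and `(ξ₁,…,ξ_n) ∈ ℝⁿ`,
`∫_{ℝⁿ} e^{-i(ξ₁x₁+⋯+ξ_n x_n)} ∏_ℓ f_ℓ(x_{ℓ+1} - x_ℓ) dx₁⋯dx_n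
  = e^{-i(ξ₁+⋯+ξ_n)x} ∏_ℓ conj(𝓕f_ℓ(ξ₁+⋯+ξ_ℓ))`,
where `𝓕f(ζ) = ∫ e^{-iζy} f(y) dy`. -/
theorem fourier_chained_kernel (n : ℕ) (hn : 1 ≤ n) (f : Fin n → ℝ → ℝ)
    (hf : ∀ ℓ, Integrable (f ℓ)) (x : ℝ) (ξ : Fin n → ℝ) :
    (∫ v : Fin n → ℝ,
        Complex.exp (-(↑(∑ ℓ, ξ ℓ * v ℓ) : ℂ) * Complex.I) *
          ∏ ℓ : Fin n,
            (↑(f ℓ ((if h : (ℓ : ℕ) + 1 < n then v ⟨(ℓ : ℕ) + 1, h⟩ else x) - v ℓ)) : ℂ))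
      = Complex.exp (-(↑(∑ ℓ, ξ ℓ) : ℂ) * ↑x * Complex.I) *
          ∏ ℓ : Fin n,
            (starRingEnd ℂ)
              (∫ y : ℝ,
                Complex.exp (-(↑(∑ m ∈ Finset.Iic ℓ, ξ m) : ℂ) * ↑y * Complex.I) *
                  (↑(f ℓ y) : ℂ)) := by
  classical
  -- the linear part of the change of variables
  set M : Matrix (Fin n) (Fin n) ℝ := fun ℓ m => if ℓ ≤ m then -1 else 0 with hM
  have hMdet : M.det = (-1) ^ n := by
    rw [Matrix.det_of_upperTriangular (by
      intro i j hij
      simp only [hM]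
      exact if_neg (not_le.mpr hij))]
    simp [hM]
  have hdetne : M.det ≠ 0 := by rw [hMdet]; exact pow_ne_zero _ (by norm_num)
  have hmap : Measure.map (Matrix.toLin' M) volume = volume := by
    rw [Real.map_matrix_volume_pi_eq_smul_volume_pi hdetne, hMdet, abs_inv, _root_.abs_pow, abs_neg,
      abs_one, one_pow, inv_one, ENNReal.ofReal_one, one_smul]
  have hLmeas : Measurable (Matrix.toLin' M) := by
    apply Continuous.measurable
    apply LinearMap.continuous_on_pi
  have hLpres : MeasurePreserving (Matrix.toLin' M) volume volume := ⟨hLmeas, hmap⟩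
  -- the change of variables map
  set ψ : (Fin n → ℝ) → (Fin n → ℝ) := fun u => Matrix.toLin' M u + fun _ => x with hψdef
  have hψpres : MeasurePreserving ψ volume volume :=
    (measurePreserving_add_right volume (fun _ => x)).comp hLpres
  have hψ : ∀ (u : Fin n → ℝ) ℓ, ψ u ℓ = x - ∑ m ∈ Finset.Ici ℓ, u m := by
    intro u ℓ
    have h1 : Matrix.toLin' M u ℓ = ∑ m, (if ℓ ≤ m then (-1 : ℝ) else 0) * u m := by
      rw [Matrix.toLin'_apply]; simp [hM, Matrix.toLin'_apply, Matrix.mulVec, dotProduct]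
    have h2 : Finset.Ici ℓ = Finset.univ.filter (fun m => ℓ ≤ m) := by ext m; simp
    have h3 : ∑ m, (if ℓ ≤ m then (-1 : ℝ) else 0) * u m
        = -∑ m ∈ Finset.Ici ℓ, u m := by
      rw [h2, Finset.sum_filter, ← Finset.sum_neg_distrib]
      apply Finset.sum_congr rfl
      intro m _
      split_ifs <;> ring
    simp only [hψdef, Pi.add_apply, h1, h3]
    ring
  -- injectivity of ψ
  have hinj : Function.Injective ψ := by
    intro u u' huu
    have hS : ∀ ℓ, ∑ m ∈ Finset.Ici ℓ, u m = ∑ m ∈ Finset.Ici ℓ, u' m := by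
      intro ℓ
      have h := congrFun huu ℓ
      rw [hψ, hψ] at h
      linarith
    funext ℓ
    have h1 := fck_sum_Ici_eq u ℓ
    have h2 := fck_sum_Ici_eq u' ℓ
    by_cases h : (ℓ : ℕ) + 1 < n
    · rw [fck_Ioi_eq_Ici ℓ h] at h1 h2
      have e1 := hS ℓ
      have e2 := hS ⟨(ℓ : ℕ) + 1, h⟩
      linarith
    · rw [fck_Ioi_eq_empty ℓ h] at h1 h2
      have e1 := hS ℓ
      simp only [Finset.sum_empty, add_zero] at h1 h2
      linarith
  have hemb : MeasurableEmbedding ψ := hψpres.measurable.measurableEmbedding hinj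
  -- the pointwise identity after the change of variables
  have key : ∀ u : Fin n → ℝ,
      Complex.exp (-(↑(∑ ℓ, ξ ℓ * ψ u ℓ) : ℂ) * Complex.I) *
        ∏ ℓ : Fin n,
          (↑(f ℓ ((if h : (ℓ : ℕ) + 1 < n then ψ u ⟨(ℓ : ℕ) + 1, h⟩ else x) - ψ u ℓ)) : ℂ)
      = Complex.exp (-(↑(∑ ℓ, ξ ℓ) : ℂ) * ↑x * Complex.I) *
          ∏ ℓ : Fin n,
            (Complex.exp ((↑(∑ m ∈ Finset.Iic ℓ, ξ m) : ℂ) * ↑(u ℓ) * Complex.I) *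
              (↑(f ℓ (u ℓ)) : ℂ)) := by
    intro u
    have harg : ∀ ℓ : Fin n,
        (if h : (ℓ : ℕ) + 1 < n then ψ u ⟨(ℓ : ℕ) + 1, h⟩ else x) - ψ u ℓ = u ℓ := by
      intro ℓ
      by_cases h : (ℓ : ℕ) + 1 < n
      · rw [dif_pos h, hψ, hψ, fck_sum_Ici_eq u ℓ, fck_Ioi_eq_Ici ℓ h]
        ring
      · rw [dif_neg h, hψ, fck_sum_Ici_eq u ℓ, fck_Ioi_eq_empty ℓ h]
        simp
    have hsum : ∑ ℓ, ξ ℓ * ψ u ℓ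
        = (∑ ℓ, ξ ℓ) * x - ∑ ℓ, (∑ m ∈ Finset.Iic ℓ, ξ m) * u ℓ := by
      have h1 : ∑ ℓ, ξ ℓ * ψ u ℓ
          = (∑ ℓ, ξ ℓ) * x - ∑ ℓ, ∑ m ∈ Finset.Ici ℓ, ξ ℓ * u m := by
        simp_rw [hψ, mul_sub, Finset.sum_sub_distrib, ← Finset.sum_mul, Finset.mul_sum]
      rw [h1, fck_sum_swap (fun ℓ m => ξ ℓ * u m)]
      congr 1
      apply Finset.sum_congr rfl
      intro m _
      rw [Finset.sum_mul]
    simp_rw [harg]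
    rw [Finset.prod_mul_distrib, ← Complex.exp_sum, ← mul_assoc, ← Complex.exp_add]
    congr 2
    rw [hsum]
    push_cast
    simp only [Finset.sum_mul, Finset.mul_sum]
    simp only [mul_comm, mul_left_comm]
    simp only [mul_sub, mul_neg, neg_sub, Finset.mul_sum, Finset.sum_sub_distrib, neg_neg]
    ring_nf
  calc
    (∫ v : Fin n → ℝ,
        Complex.exp (-(↑(∑ ℓ, ξ ℓ * v ℓ) : ℂ) * Complex.I) *
          ∏ ℓ : Fin n,
            (↑(f ℓ ((if h : (ℓ : ℕ) + 1 < n then v ⟨(ℓ : ℕ) + 1, h⟩ else x) - v ℓ)) : ℂ))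
      = ∫ u : Fin n → ℝ,
          Complex.exp (-(↑(∑ ℓ, ξ ℓ * ψ u ℓ) : ℂ) * Complex.I) *
            ∏ ℓ : Fin n,
              (↑(f ℓ ((if h : (ℓ : ℕ) + 1 < n then ψ u ⟨(ℓ : ℕ) + 1, h⟩ else x) - ψ u ℓ)) : ℂ) :=
        (hψpres.integral_comp hemb _).symm
    _ = ∫ u : Fin n → ℝ,
          Complex.exp (-(↑(∑ ℓ, ξ ℓ) : ℂ) * ↑x * Complex.I) *
            ∏ ℓ : Fin n,
              (Complex.exp ((↑(∑ m ∈ Finset.Iic ℓ, ξ m) : ℂ) * ↑(u ℓ) * Complex.I) *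
                (↑(f ℓ (u ℓ)) : ℂ)) := by simp_rw [key]
    _ = Complex.exp (-(↑(∑ ℓ, ξ ℓ) : ℂ) * ↑x * Complex.I) *
          ∫ u : Fin n → ℝ,
            ∏ ℓ : Fin n,
              (Complex.exp ((↑(∑ m ∈ Finset.Iic ℓ, ξ m) : ℂ) * ↑(u ℓ) * Complex.I) *
                (↑(f ℓ (u ℓ)) : ℂ)) := integral_const_mul _ _
    _ = Complex.exp (-(↑(∑ ℓ, ξ ℓ) : ℂ) * ↑x * Complex.I) *
          ∏ ℓ : Fin n,
            ∫ y : ℝ,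
              Complex.exp ((↑(∑ m ∈ Finset.Iic ℓ, ξ m) : ℂ) * ↑y * Complex.I) *
                (↑(f ℓ y) : ℂ) := by
        rw [integral_fintype_prod_volume_eq_prod
          (f := fun ℓ y => Complex.exp ((↑(∑ m ∈ Finset.Iic ℓ, ξ m) : ℂ) * ↑y * Complex.I) *
            (↑(f ℓ y) : ℂ))]
    _ = Complex.exp (-(↑(∑ ℓ, ξ ℓ) : ℂ) * ↑x * Complex.I) *
          ∏ ℓ : Fin n,
            (starRingEnd ℂ)
              (∫ y : ℝ,
                Complex.exp (-(↑(∑ m ∈ Finset.Iic ℓ, ξ m) : ℂ) * ↑y * Complex.I) *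
                  (↑(f ℓ y) : ℂ)) := by
        congr 1
        apply Finset.prod_congr rfl
        intro ℓ _
        rw [← integral_conj]
        apply integral_congr_ae
        filter_upwards with y
        simp only [map_mul, ← Complex.exp_conj, map_neg, Complex.conj_I, Complex.conj_ofReal]
        ring_nf
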